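/- (Separation principle with constant metrics.) Let f : ℝⁿ → ℝⁿ be continuously differentiable with Jacobian A(x), B an n×m real matrix, C a p×n real matrix. Suppose there exist symmetric positive definite matrices W_c, W_o, constants λ_c > 0, λ_o > 0, ρ_c ≥ 0, ρ_o ≥ 0 such that for all x ∈ ℝⁿ: W_c·A(x)ᵀ + A(x)·W_c - ρ_c·B·Bᵀ ⪯ -2λ_c·W_c and A(x)ᵀ·W_o + W_o·A(x) - ρ_o·Cᵀ·C ⪯ -2λ_o·W_o. Define K = -(ρ_c/2)·Bᵀ·W_c⁻¹ and L = (ρ_o/2)·W_o⁻¹·Cᵀ. Let u⋆ : [0,∞) → ℝᵐ be continuous and x⋆ a solution of ẋ⋆ = f(x⋆) + B·u⋆(t). Consider the output-feedback closed loop: ẋ = f(x) + B·(u⋆(t) + K·(x̂ - x⋆(t))), ẋ̂ = f(x̂) + B·(u⋆(t) + K·(x̂ - x⋆(t))) + L·(C·x - C·x̂). Then there exists a constant c > 0, depending only on A, B, C, W_c, W_o, ρ_c, ρ_o, λ_c, λ_o, such that for every solution (x, x̂) on [0,∞) and all t ≥ 0: ‖x(t) - x⋆(t)‖ + ‖x̂(t)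 - x(t)‖ ≤ c·(1 + t)·e^{-min(λ_c, λ_o)·t}·(‖x(0) - x⋆(0)‖ + ‖x̂(0) - x(0)‖). In particular the certainty-equivalence combination of the contraction-metric controller and observer exponentially stabilizes every feasible target trajectory by output feedback. -/

import Mathlib

open Matrix Topology Filter

namespace SepAux


variable {k q : ℕ}

lemma dot_self_nonneg (v : Fin k → ℝ) : 0 ≤ v ⬝ᵥ v :=
  Finset.sum_nonneg fun i _ => mul_self_nonneg _

lemma dot_sq_le (u v : Fin k → ℝ) : (u ⬝ᵥ v) ^ 2 ≤ (u ⬝ᵥ u) * (v ⬝ᵥ v) := by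
  simpa [dotProduct, sq] using Finset.sum_mul_sq_le_sq_mul_sq Finset.univ u v

lemma dot_CS (u v : Fin k → ℝ) :
    u ⬝ᵥ v ≤ Real.sqrt (u ⬝ᵥ u) * Real.sqrt (v ⬝ᵥ v) := by
  have h1 : u ⬝ᵥ v ≤ |u ⬝ᵥ v| := le_abs_self _
  have h2 : |u ⬝ᵥ v| = Real.sqrt ((u ⬝ᵥ v) ^ 2) := (Real.sqrt_sq_eq_abs _).symm
  rw [h2] at h1
  refine h1.trans ?_
  rw [← Real.sqrt_mul (dot_self_nonneg u)]
  exact Real.sqrt_le_sqrt (dot_sq_le u v)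

noncomputable def frobSq (M : Matrix (Fin q) (Fin k) ℝ) : ℝ := ∑ i, ∑ j, (M i j) ^ 2

lemma frobSq_nonneg (M : Matrix (Fin q) (Fin k) ℝ) : 0 ≤ frobSq M :=
  Finset.sum_nonneg fun _ _ => Finset.sum_nonneg fun _ _ => sq_nonneg _

lemma mulVec_dot_le (M : Matrix (Fin q) (Fin k) ℝ) (v : Fin k → ℝ) :
    (M *ᵥ v) ⬝ᵥ (M *ᵥ v) ≤ frobSq M * (v ⬝ᵥ v) := by
  have h : ∀ i, (M *ᵥ v) i * (M *ᵥ v) i ≤ (∑ j, (M i j) ^ 2) * (v ⬝ᵥ v) := by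
    intro i
    have := dot_sq_le (M i) v
    have hv : (M *ᵥ v) i = M i ⬝ᵥ v := rfl
    have hMi : M i ⬝ᵥ M i = ∑ j, (M i j) ^ 2 := by simp [dotProduct, sq]
    rw [hv]
    calc (M i ⬝ᵥ v) * (M i ⬝ᵥ v) = (M i ⬝ᵥ v) ^ 2 := (sq _).symm
      _ ≤ (M i ⬝ᵥ M i) * (v ⬝ᵥ v) := this
      _ = (∑ j, (M i j) ^ 2) * (v ⬝ᵥ v) := by rw [hMi]
  calc (M *ᵥ v) ⬝ᵥ (M *ᵥ v) = ∑ i, (M *ᵥ v) i * (M *ᵥ v) i := rfl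
    _ ≤ ∑ i, (∑ j, (M i j) ^ 2) * (v ⬝ᵥ v) := Finset.sum_le_sum fun i _ => h i
    _ = frobSq M * (v ⬝ᵥ v) := by rw [frobSq, Finset.sum_mul]

lemma sqrt_mulVec_dot_le (M : Matrix (Fin q) (Fin k) ℝ) (v : Fin k → ℝ) :
    Real.sqrt ((M *ᵥ v) ⬝ᵥ (M *ᵥ v)) ≤ Real.sqrt (frobSq M) * Real.sqrt (v ⬝ᵥ v) := by
  rw [← Real.sqrt_mul (frobSq_nonneg M)]
  exact Real.sqrt_le_sqrt (mulVec_dot_le M v)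

lemma dot_mulVec_swap (M : Matrix (Fin q) (Fin k) ℝ) (u : Fin q → ℝ) (v : Fin k → ℝ) :
    u ⬝ᵥ (M *ᵥ v) = (Mᵀ *ᵥ u) ⬝ᵥ v := by
  rw [dotProduct_mulVec, Matrix.mulVec_transpose]

lemma sym_swap {P : Matrix (Fin k) (Fin k) ℝ} (hP : Pᵀ = P) (u v : Fin k → ℝ) :
    u ⬝ᵥ (P *ᵥ v) = v ⬝ᵥ (P *ᵥ u) := by
  rw [dot_mulVec_swap, hP, dotProduct_comm]

lemma quad_upper (M : Matrix (Fin k) (Fin k) ℝ) (v : Fin k → ℝ) :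
    v ⬝ᵥ (M *ᵥ v) ≤ Real.sqrt (frobSq M) * (v ⬝ᵥ v) := by
  calc v ⬝ᵥ (M *ᵥ v) ≤ Real.sqrt (v ⬝ᵥ v) * Real.sqrt ((M *ᵥ v) ⬝ᵥ (M *ᵥ v)) := dot_CS _ _
    _ ≤ Real.sqrt (v ⬝ᵥ v) * (Real.sqrt (frobSq M) * Real.sqrt (v ⬝ᵥ v)) :=
        mul_le_mul_of_nonneg_left (sqrt_mulVec_dot_le M v) (Real.sqrt_nonneg _)
    _ = Real.sqrt (frobSq M) * (Real.sqrt (v ⬝ᵥ v) * Real.sqrt (v ⬝ᵥ v)) := by ring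
    _ = Real.sqrt (frobSq M) * (v ⬝ᵥ v) := by
        rw [Real.mul_self_sqrt (dot_self_nonneg v)]

lemma psd_transpose_eq {P : Matrix (Fin k) (Fin k) ℝ} (hP : P.PosSemidef) : Pᵀ = P := by
  have := hP.1
  rwa [Matrix.IsHermitian, Matrix.conjTranspose_eq_transpose_of_trivial] at this

lemma psd_dot_nonneg {P : Matrix (Fin k) (Fin k) ℝ} (hP : P.PosSemidef) (v : Fin k → ℝ) :
    0 ≤ v ⬝ᵥ (P *ᵥ v) := by
  have := hP.dotProduct_mulVec_nonneg v
  simpa using this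

lemma psd_cs {P : Matrix (Fin k) (Fin k) ℝ} (hP : P.PosSemidef) (u v : Fin k → ℝ) :
    (u ⬝ᵥ (P *ᵥ v)) ^ 2 ≤ (u ⬝ᵥ (P *ᵥ u)) * (v ⬝ᵥ (P *ᵥ v)) := by
  have hsym := psd_transpose_eq hP
  have h0 : ∀ x : ℝ,
      0 ≤ (v ⬝ᵥ (P *ᵥ v)) * (x * x) + (2 * (u ⬝ᵥ (P *ᵥ v))) * x + (u ⬝ᵥ (P *ᵥ u)) := by
    intro x
    have h := psd_dot_nonneg hP (u + x • v)
    have hswap : v ⬝ᵥ (P *ᵥ u) = u ⬝ᵥ (P *ᵥ v) := sym_swap hsym v u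
    rw [Matrix.mulVec_add, Matrix.mulVec_smul, add_dotProduct, dotProduct_add,
      dotProduct_add, smul_dotProduct, dotProduct_smul,
      smul_dotProduct, dotProduct_smul, hswap] at h
    simp only [smul_eq_mul] at h
    nlinarith [h]
  have hd := discrim_le_zero h0
  rw [discrim] at hd
  nlinarith [hd]

lemma posdef_lower {P : Matrix (Fin k) (Fin k) ℝ} (hP : P.PosDef) (v : Fin k → ℝ) :
    v ⬝ᵥ v ≤ Real.sqrt (frobSq P⁻¹) * (v ⬝ᵥ (P *ᵥ v)) := by
  have hdet : IsUnit P.det := (Matrix.isUnit_iff_isUnit_det _).1 hP.isUnit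
  have hv : P *ᵥ (P⁻¹ *ᵥ v) = v := by
    rw [Matrix.mulVec_mulVec, Matrix.mul_nonsing_inv _ hdet, Matrix.one_mulVec]
  have key := psd_cs hP.posSemidef v (P⁻¹ *ᵥ v)
  rw [hv] at key
  have h2 : (P⁻¹ *ᵥ v) ⬝ᵥ v = v ⬝ᵥ (P⁻¹ *ᵥ v) := dotProduct_comm _ _
  rw [h2] at key
  have h3 : v ⬝ᵥ (P⁻¹ *ᵥ v) ≤ Real.sqrt (frobSq P⁻¹) * (v ⬝ᵥ v) := quad_upper _ v
  have hq : 0 ≤ v ⬝ᵥ (P *ᵥ v) := psd_dot_nonneg hP.posSemidef v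
  have hg : 0 ≤ Real.sqrt (frobSq P⁻¹) := Real.sqrt_nonneg _
  rcases (dot_self_nonneg v).eq_or_lt with h | h
  · rw [← h]; exact mul_nonneg hg hq
  · nlinarith [key, h3, mul_le_mul_of_nonneg_left h3 hq]




variable {k n : ℕ}

lemma hasDerivAt_dotProduct {u v : ℝ → Fin k → ℝ} {u' v' : Fin k → ℝ} {t : ℝ}
    (hu : HasDerivAt u u' t) (hv : HasDerivAt v v' t) :
    HasDerivAt (fun s => u s ⬝ᵥ v s) (u' ⬝ᵥ v t + u t ⬝ᵥ v') t := by
  have hu' := hasDerivAt_pi.1 hu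
  have hv' := hasDerivAt_pi.1 hv
  have h : HasDerivAt (fun s => ∑ i, u s i * v s i)
      (∑ i, (u' i * v t i + u t i * v' i)) t :=
    HasDerivAt.fun_sum fun i _ => (hu' i).mul (hv' i)
  simpa [dotProduct, Finset.sum_add_distrib] using h

lemma hasDerivAt_mulVec (M : Matrix (Fin n) (Fin k) ℝ) {u : ℝ → Fin k → ℝ}
    {u' : Fin k → ℝ} {t : ℝ} (hu : HasDerivAt u u' t) :
    HasDerivAt (fun s => M *ᵥ u s) (M *ᵥ u') t := by
  refine hasDerivAt_pi.2 fun i => ?_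
  have hu' := hasDerivAt_pi.1 hu
  have h : HasDerivAt (fun s => ∑ j, M i j * u s j) (∑ j, M i j * u' j) t :=
    HasDerivAt.fun_sum fun j _ => (hu' j).const_mul _
  simpa [Matrix.mulVec, dotProduct] using h

noncomputable def dotCLM (w : Fin k → ℝ) : (Fin k → ℝ) →L[ℝ] ℝ :=
  LinearMap.toContinuousLinearMap
    { toFun := fun u => w ⬝ᵥ u
      map_add' := fun a b => dotProduct_add w a b
      map_smul' := fun c a => by simp }

@[simp] lemma dotCLM_apply (w u : Fin k → ℝ) : dotCLM w u = w ⬝ᵥ u := rfl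

lemma dot_intervalIntegral (w : Fin k → ℝ) {g : ℝ → Fin k → ℝ}
    (hg : IntervalIntegrable g MeasureTheory.volume 0 1) :
    w ⬝ᵥ (∫ s in (0:ℝ)..1, g s) = ∫ s in (0:ℝ)..1, w ⬝ᵥ g s := by
  have := (dotCLM w).intervalIntegral_comp_comm hg
  simpa using this.symm

lemma mvt_integral
    {f : (Fin n → ℝ) → (Fin n → ℝ)} {A : (Fin n → ℝ) → Matrix (Fin n) (Fin n) ℝ}
    (hf : ∀ x : Fin n → ℝ,
      HasFDerivAt f ((Matrix.toLin' (A x)).toContinuousLinearMap) x)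
    (hA : Continuous A) (a b : Fin n → ℝ) :
    f b - f a = ∫ s in (0:ℝ)..1, (A (a + s • (b - a))) *ᵥ (b - a) := by
  have hg : ∀ s ∈ Set.uIcc (0:ℝ) 1,
      HasDerivAt (fun s : ℝ => f (a + s • (b - a)))
        ((A (a + s • (b - a))) *ᵥ (b - a)) s := by
    intro s _
    have h1 : HasDerivAt (fun s : ℝ => a + s • (b - a)) (b - a) s := by
      simpa using ((hasDerivAt_id s).smul_const (b - a)).const_add a
    have h2 := (hf (a + s • (b - a))).comp_hasDerivAt s h1
    simpa [Matrix.toLin'_apply, Function.comp_def] using h2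
  have hcont : Continuous fun s : ℝ => (A (a + s • (b - a))) *ᵥ (b - a) := by
    exact (hA.comp (by continuity)).matrix_mulVec continuous_const
  have hint : IntervalIntegrable (fun s : ℝ => (A (a + s • (b - a))) *ᵥ (b - a))
      MeasureTheory.volume 0 1 := hcont.intervalIntegrable _ _
  have h := intervalIntegral.integral_eq_sub_of_hasDerivAt hg hint
  rw [h]
  simp

variable {n p m : ℕ}

lemma lmi_scalar_obs {Wo A : Matrix (Fin n) (Fin n) ℝ} {C : Matrix (Fin p) (Fin n) ℝ}
    {lamo ρo : ℝ} (hsym : Woᵀ = Wo)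
    (h : ((-(2 * lamo)) • Wo - (Aᵀ * Wo + Wo * A - ρo • (Cᵀ * C))).PosSemidef)
    (v : Fin n → ℝ) :
    2 * (v ⬝ᵥ (Wo *ᵥ (A *ᵥ v))) ≤
      -(2 * lamo) * (v ⬝ᵥ (Wo *ᵥ v)) + ρo * ((C *ᵥ v) ⬝ᵥ (C *ᵥ v)) := by
  have h0 := psd_dot_nonneg h v
  have e1 : v ⬝ᵥ ((Aᵀ * Wo) *ᵥ v) = v ⬝ᵥ (Wo *ᵥ (A *ᵥ v)) := by
    rw [← Matrix.mulVec_mulVec, dot_mulVec_swap Aᵀ, Matrix.transpose_transpose,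
      dot_mulVec_swap Wo, hsym, dotProduct_comm]
  have e2 : v ⬝ᵥ ((Wo * A) *ᵥ v) = v ⬝ᵥ (Wo *ᵥ (A *ᵥ v)) := by
    rw [← Matrix.mulVec_mulVec]
  have e3 : v ⬝ᵥ ((Cᵀ * C) *ᵥ v) = (C *ᵥ v) ⬝ᵥ (C *ᵥ v) := by
    rw [← Matrix.mulVec_mulVec, dot_mulVec_swap Cᵀ, Matrix.transpose_transpose]
  simp only [Matrix.sub_mulVec, Matrix.add_mulVec, Matrix.smul_mulVec,
    dotProduct_sub, dotProduct_add, dotProduct_smul,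
    e1, e2, e3, smul_eq_mul] at h0
  linarith

lemma lmi_scalar_ctrl {Wc A : Matrix (Fin n) (Fin n) ℝ} {B : Matrix (Fin n) (Fin m) ℝ}
    {lamc ρc : ℝ} (hsym : Wcᵀ = Wc) (hinv : Wc * Wc⁻¹ = 1)
    (h : ((-(2 * lamc)) • Wc - (Wc * Aᵀ + A * Wc - ρc • (B * Bᵀ))).PosSemidef)
    (v : Fin n → ℝ) :
    2 * ((Wc⁻¹ *ᵥ v) ⬝ᵥ (A *ᵥ v)) ≤
      -(2 * lamc) * (v ⬝ᵥ (Wc⁻¹ *ᵥ v)) +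
        ρc * ((Bᵀ *ᵥ (Wc⁻¹ *ᵥ v)) ⬝ᵥ (Bᵀ *ᵥ (Wc⁻¹ *ᵥ v))) := by
  set w := Wc⁻¹ *ᵥ v with hw
  have h0 := psd_dot_nonneg h w
  have hWcw : Wc *ᵥ w = v := by
    rw [hw, Matrix.mulVec_mulVec, hinv, Matrix.one_mulVec]
  have hsymInv : Wc⁻¹ᵀ = Wc⁻¹ := by
    rw [Matrix.transpose_nonsing_inv, hsym]
  have e0 : w ⬝ᵥ (Wc *ᵥ w) = v ⬝ᵥ w := by
    rw [hWcw, dotProduct_comm]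
  have e1 : w ⬝ᵥ ((Wc * Aᵀ) *ᵥ w) = w ⬝ᵥ (A *ᵥ v) := by
    rw [← Matrix.mulVec_mulVec, dot_mulVec_swap Wc, hsym, hWcw,
      dot_mulVec_swap Aᵀ, Matrix.transpose_transpose, dotProduct_comm]
  have e2 : w ⬝ᵥ ((A * Wc) *ᵥ w) = w ⬝ᵥ (A *ᵥ v) := by
    rw [← Matrix.mulVec_mulVec, hWcw]
  have e3 : w ⬝ᵥ ((B * Bᵀ) *ᵥ w) = (Bᵀ *ᵥ w) ⬝ᵥ (Bᵀ *ᵥ w) := by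
    rw [← Matrix.mulVec_mulVec, dot_mulVec_swap B]
  simp only [Matrix.sub_mulVec, Matrix.add_mulVec, Matrix.smul_mulVec,
    dotProduct_sub, dotProduct_add, dotProduct_smul,
    e0, e1, e2, e3, smul_eq_mul] at h0
  linarith

open Matrix Topology Filter

/-- Exponential decay from differential inequality `V' ≤ -2λ V` on `[0,∞)`. -/
lemma gron_decay {V dV : ℝ → ℝ} {lam : ℝ} (hlam : 0 ≤ lam)
    (hd : ∀ t, 0 ≤ t → HasDerivAt V (dV t) t)
    (hb : ∀ t, 0 ≤ t → dV t ≤ -(2 * lam) * V t) {t : ℝ} (ht : 0 ≤ t) :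
    V t ≤ V 0 * Real.exp (-(2 * lam) * t) := by
  set F : ℝ → ℝ := fun s => V s * Real.exp (2 * lam * s) with hF
  have hFd : ∀ s, 0 ≤ s → HasDerivAt F
      (dV s * Real.exp (2 * lam * s) + V s * (Real.exp (2 * lam * s) * (2 * lam))) s := by
    intro s hs
    have hexp : HasDerivAt (fun s : ℝ => Real.exp (2 * lam * s))
        (Real.exp (2 * lam * s) * (2 * lam)) s := by
      simpa using (((hasDerivAt_id s).const_mul (2 * lam)).exp)
    exact (hd s hs).mul hexp
  have hanti : AntitoneOn F (Set.Ici (0:ℝ)) := by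
    apply antitoneOn_of_deriv_nonpos (convex_Ici 0)
    · intro s hs
      exact ((hFd s hs).continuousAt).continuousWithinAt
    · intro s hs
      rw [interior_Ici] at hs
      exact (hFd s (le_of_lt hs)).differentiableAt.differentiableWithinAt
    · intro s hs
      rw [interior_Ici] at hs
      rw [(hFd s (le_of_lt hs)).deriv]
      have h1 := hb s (le_of_lt hs)
      have h2 : (0:ℝ) < Real.exp (2 * lam * s) := Real.exp_pos _
      nlinarith
  have hle : F t ≤ F 0 := hanti (Set.self_mem_Ici) (Set.mem_Ici.2 ht) ht
  have hid : V t = F t * Real.exp (-(2 * lam) * t) := by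
    rw [hF]
    simp only []
    rw [mul_assoc, ← Real.exp_add]
    ring_nf
    simp
  rw [hid]
  simp only [hF] at hle ⊢
  have h2 : (0:ℝ) ≤ Real.exp (-(2 * lam) * t) := (Real.exp_pos _).le
  calc V t * Real.exp (2 * lam * t) * Real.exp (-(2 * lam) * t)
      ≤ V 0 * Real.exp (2 * lam * 0) * Real.exp (-(2 * lam) * t) :=
        mul_le_mul_of_nonneg_right hle h2
    _ = V 0 * Real.exp (-(2 * lam) * t) := by norm_num

/-- Linear growth from bounded derivative on `[0, T]`. -/
lemma lin_growth {z dz : ℝ → ℝ} {Cb T : ℝ} (hT : 0 ≤ T)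
    (hd : ∀ t, 0 ≤ t → HasDerivAt z (dz t) t)
    (hb : ∀ t, 0 ≤ t → t ≤ T → dz t ≤ Cb) : z T ≤ z 0 + Cb * T := by
  set G : ℝ → ℝ := fun s => z s - Cb * s with hG
  have hGd : ∀ s, 0 ≤ s → HasDerivAt G (dz s - Cb) s := by
    intro s hs
    have hlin : HasDerivAt (fun s : ℝ => Cb * s) Cb s := by
      simpa using ((hasDerivAt_id s).const_mul Cb)
    exact (hd s hs).sub hlin
  have hanti : AntitoneOn G (Set.Icc 0 T) := by
    apply antitoneOn_of_deriv_nonpos (convex_Icc 0 T)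
    · intro s hs
      exact ((hGd s hs.1).continuousAt).continuousWithinAt
    · intro s hs
      rw [interior_Icc] at hs
      exact (hGd s hs.1.le).differentiableAt.differentiableWithinAt
    · intro s hs
      rw [interior_Icc] at hs
      rw [(hGd s hs.1.le).deriv]
      have := hb s hs.1.le hs.2.le
      linarith
  have := hanti (Set.mem_Icc.2 ⟨le_refl 0, hT⟩) (Set.mem_Icc.2 ⟨hT, le_refl T⟩) hT
  simp only [hG] at this
  linarith

/-- `√(V0 * exp(-(2λ)t)) = √V0 * exp(-λ t)`. -/
lemma sqrt_exp_decay (V0 lam t : ℝ) :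
    Real.sqrt (V0 * Real.exp (-(2 * lam) * t)) = Real.sqrt V0 * Real.exp (-lam * t) := by
  rw [Real.sqrt_mul' _ (Real.exp_pos _).le]
  · congr 1
    rw [show -(2 * lam) * t = (-lam * t) + (-lam * t) by ring, Real.exp_add]
    exact Real.sqrt_mul_self (Real.exp_pos (-lam * t)).le

/-- Scalar core of the `δ`-regularized derivative bound. -/
lemma dz_bound {VcS X ws E E0 eL μ lamc κ b δ : ℝ}
    (hδ : 0 < δ) (hwpos : 0 < ws) (hw2 : ws * ws = VcS + δ)
    (hVcS : 0 ≤ VcS) (hδw : Real.sqrt δ ≤ ws)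
    (hE : 0 < E) (hEle : E ≤ E0) (hE0 : 0 < E0)
    (heL : 0 < eL) (hEeL : E * eL ≤ 1)
    (hμ : 0 < μ) (hμc : μ ≤ lamc)
    (hκ : 0 ≤ κ) (hb : 0 ≤ b)
    (hX : 2 * X ≤ -(2 * μ) * VcS + κ * ws * (b * eL)) :
    (X / ws) * E + ws * (E * μ) ≤ κ * b / 2 + lamc * Real.sqrt δ * E0 := by
  have h2ws : (0:ℝ) < 2 * ws := by linarith
  have h1 : X / ws ≤ (-(2 * μ) * VcS + κ * ws * (b * eL)) / (2 * ws) := by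
    rw [div_le_div_iff₀ hwpos h2ws]
    nlinarith
  have h2 : (X / ws) * E + ws * (E * μ) ≤
      ((-(2 * μ) * VcS + κ * ws * (b * eL)) / (2 * ws)) * E + ws * (E * μ) := by
    have := mul_le_mul_of_nonneg_right h1 hE.le
    linarith
  have hVceq : VcS = ws * ws - δ := by linarith
  have hEq : ((-(2 * μ) * (ws * ws - δ) + κ * ws * (b * eL)) / (2 * ws)) * E +
      ws * (E * μ) = E * (μ * (δ / ws)) + E * (κ * b * eL) / 2 := by
    field_simp
    ring
  have h5 : δ / ws ≤ Real.sqrt δ := by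
    rw [div_le_iff₀ hwpos]
    nlinarith [Real.mul_self_sqrt hδ.le, Real.sqrt_nonneg δ]
  have h6 : E * (μ * (δ / ws)) ≤ lamc * Real.sqrt δ * E0 := by
    have hdnn : 0 ≤ δ / ws := by positivity
    have h6a : μ * (δ / ws) ≤ lamc * Real.sqrt δ := by nlinarith
    have h6b : 0 ≤ lamc * Real.sqrt δ := by
      have : 0 < lamc := lt_of_lt_of_le hμ hμc
      positivity
    calc E * (μ * (δ / ws)) ≤ E * (lamc * Real.sqrt δ) :=
          mul_le_mul_of_nonneg_left h6a hE.le
      _ ≤ E0 * (lamc * Real.sqrt δ) := mul_le_mul_of_nonneg_right hEle h6b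
      _ = lamc * Real.sqrt δ * E0 := by ring
  have h7 : E * (κ * b * eL) / 2 ≤ κ * b / 2 := by
    have hkb : 0 ≤ κ * b := mul_nonneg hκ hb
    have : E * (κ * b * eL) ≤ κ * b := by
      calc E * (κ * b * eL) = (κ * b) * (E * eL) := by ring
        _ ≤ (κ * b) * 1 := mul_le_mul_of_nonneg_left hEeL hkb
        _ = κ * b := mul_one _
    linarith
  rw [hVceq] at h2
  calc (X / ws) * E + ws * (E * μ) ≤ _ := h2
    _ = _ := hEq
    _ ≤ κ * b / 2 + lamc * Real.sqrt δ * E0 := by linarith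

end SepAux
set_option maxHeartbeats 2000000 in
open SepAux in
/-- Separation principle with constant metrics: the certainty-equivalence combination of
the contraction-metric state-feedback controller `K = -(ρ_c/2)BᵀW_c⁻¹` and the
contraction-metric observer with gain `L = (ρ_o/2)W_o⁻¹Cᵀ` exponentially stabilizes every
feasible target trajectory by output feedback, with rate `min(λ_c, λ_o)` up to a factor
`c(1+t)`. -/
theorem separation_principle_constant_metric {n m p : ℕ}
    (f : (Fin n → ℝ) → (Fin n → ℝ))
    (A : (Fin n → ℝ) → Matrix (Fin n) (Fin n) ℝ)
    (hf : ∀ x : Fin n → ℝ,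
      HasFDerivAt f ((Matrix.toLin' (A x)).toContinuousLinearMap) x)
    (hA : Continuous A)
    (B : Matrix (Fin n) (Fin m) ℝ) (C : Matrix (Fin p) (Fin n) ℝ)
    (Wc Wo : Matrix (Fin n) (Fin n) ℝ) (hWc : Wc.PosDef) (hWo : Wo.PosDef)
    (lamc lamo ρc ρo : ℝ)
    (hlamc : 0 < lamc) (hlamo : 0 < lamo) (hρc : 0 ≤ ρc) (hρo : 0 ≤ ρo)
    (hLMIc : ∀ x : Fin n → ℝ,
      ((-(2 * lamc)) • Wc - (Wc * (A x)ᵀ + A x * Wc - ρc • (B * Bᵀ))).PosSemidef)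
    (hLMIo : ∀ x : Fin n → ℝ,
      ((-(2 * lamo)) • Wo - ((A x)ᵀ * Wo + Wo * A x - ρo • (Cᵀ * C))).PosSemidef)
    (K : Matrix (Fin m) (Fin n) ℝ) (hK : K = (-(ρc / 2)) • (Bᵀ * Wc⁻¹))
    (L : Matrix (Fin n) (Fin p) ℝ) (hL : L = (ρo / 2) • (Wo⁻¹ * Cᵀ)) :
    ∃ c : ℝ, 0 < c ∧
      ∀ ustar : ℝ → (Fin m → ℝ), Continuous ustar →
      ∀ xstar x xhat : ℝ → (Fin n → ℝ),
        (∀ t : ℝ, 0 ≤ t →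
          HasDerivAt xstar (f (xstar t) + B.mulVec (ustar t)) t) →
        (∀ t : ℝ, 0 ≤ t →
          HasDerivAt x
            (f (x t) + B.mulVec (ustar t + K.mulVec (xhat t - xstar t))) t) →
        (∀ t : ℝ, 0 ≤ t →
          HasDerivAt xhat
            (f (xhat t) + B.mulVec (ustar t + K.mulVec (xhat t - xstar t)) +
              L.mulVec (C.mulVec (x t) - C.mulVec (xhat t))) t) →
        ∀ t : ℝ, 0 ≤ t →
          Real.sqrt ((x t - xstar t) ⬝ᵥ (x t - xstar t)) +
              Real.sqrt ((xhat t - x t) ⬝ᵥ (xhat t - x t)) ≤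
            c * (1 + t) * Real.exp (-(min lamc lamo) * t) *
              (Real.sqrt ((x 0 - xstar 0) ⬝ᵥ (x 0 - xstar 0)) +
                Real.sqrt ((xhat 0 - x 0) ⬝ᵥ (xhat 0 - x 0))) := by
  -- matrix facts
  have hdc : IsUnit Wc.det := (Matrix.isUnit_iff_isUnit_det _).1 hWc.isUnit
  have hdo : IsUnit Wo.det := (Matrix.isUnit_iff_isUnit_det _).1 hWo.isUnit
  have hWcsym : Wcᵀ = Wc := psd_transpose_eq hWc.posSemidef
  have hWosym : Woᵀ = Wo := psd_transpose_eq hWo.posSemidef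
  have hWcisym : Wc⁻¹ᵀ = Wc⁻¹ := by rw [Matrix.transpose_nonsing_inv, hWcsym]
  have hWcinv : Wc * Wc⁻¹ = 1 := Matrix.mul_nonsing_inv _ hdc
  have hWoinv : Wo * Wo⁻¹ = 1 := Matrix.mul_nonsing_inv _ hdo
  have hWcii : Wc⁻¹⁻¹ = Wc := Matrix.nonsing_inv_nonsing_inv _ hdc
  set μ := min lamc lamo with hμ
  have hμpos : 0 < μ := lt_min hlamc hlamo
  have hμc : μ ≤ lamc := min_le_left _ _
  have hμo : μ ≤ lamo := min_le_right _ _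
  set N : Matrix (Fin n) (Fin n) ℝ := Wc⁻¹ * (B * K) with hN
  set sαc := Real.sqrt (frobSq Wc⁻¹) with hsαc
  set sβc := Real.sqrt (frobSq Wc) with hsβc
  set sαo := Real.sqrt (frobSq Wo) with hsαo
  set sβo := Real.sqrt (frobSq Wo⁻¹) with hsβo
  have hsαcnn : 0 ≤ sαc := by rw [hsαc]; exact Real.sqrt_nonneg _
  have hsβcnn : 0 ≤ sβc := by rw [hsβc]; exact Real.sqrt_nonneg _
  have hsαonn : 0 ≤ sαo := by rw [hsαo]; exact Real.sqrt_nonneg _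
  have hsβonn : 0 ≤ sβo := by rw [hsβo]; exact Real.sqrt_nonneg _
  set κ := 2 * Real.sqrt (frobSq N) * Real.sqrt sβc * Real.sqrt sβo with hκ
  have hκnn : 0 ≤ κ := by positivity
  set c1 := Real.sqrt sβc * Real.sqrt sαc with hc1
  set c2 := Real.sqrt sβc * (κ / 2) * Real.sqrt sαo with hc2
  set c3 := Real.sqrt sβo * Real.sqrt sαo with hc3
  have hc1nn : 0 ≤ c1 := by positivity
  have hc2nn : 0 ≤ c2 := by positivity
  have hc3nn : 0 ≤ c3 := by positivity
  refine ⟨c1 + c2 + c3 + 1, by positivity, ?_⟩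
  intro ustar hustar xstar x xhat hxstar hx hxhat t0 ht0
  set e : ℝ → Fin n → ℝ := fun s => x s - xstar s with he
  set eo : ℝ → Fin n → ℝ := fun s => xhat s - x s with heo
  have he' : ∀ s, e s = x s - xstar s := fun _ => rfl
  have heo' : ∀ s, eo s = xhat s - x s := fun _ => rfl
  set Vc : ℝ → ℝ := fun s => e s ⬝ᵥ (Wc⁻¹ *ᵥ e s) with hVcdef
  set Vo : ℝ → ℝ := fun s => eo s ⬝ᵥ (Wo *ᵥ eo s) with hVodef
  have hVcnn : ∀ s, 0 ≤ Vc s := fun s => psd_dot_nonneg hWc.inv.posSemidef _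
  have hVonn : ∀ s, 0 ≤ Vo s := fun s => psd_dot_nonneg hWo.posSemidef _
  set Dc : ℝ → Fin n → ℝ :=
    fun s => (f (x s) - f (xstar s)) + B *ᵥ (K *ᵥ (eo s + e s)) with hDcdef
  set Do : ℝ → Fin n → ℝ :=
    fun s => (f (xhat s) - f (x s)) + L *ᵥ (C *ᵥ x s - C *ᵥ xhat s) with hDodef
  -- derivatives of the error signals
  have hde : ∀ s, 0 ≤ s → HasDerivAt e (Dc s) s := by
    intro s hs
    have h := (hx s hs).sub (hxstar s hs)
    rw [he]
    refine h.congr_deriv (Eq.symm ?_)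
    simp only [hDcdef]
    have hxx : eo s + e s = xhat s - xstar s := by rw [heo', he']; abel
    rw [hxx]
    simp only [Matrix.mulVec_add]
    abel
  have hdeo : ∀ s, 0 ≤ s → HasDerivAt eo (Do s) s := by
    intro s hs
    have h := (hxhat s hs).sub (hx s hs)
    rw [heo]
    refine h.congr_deriv (Eq.symm ?_)
    simp only [hDodef]
    abel
  -- derivatives of the Lyapunov functions
  have hdVc : ∀ s, 0 ≤ s → HasDerivAt Vc (2 * (e s ⬝ᵥ (Wc⁻¹ *ᵥ Dc s))) s := by
    intro s hs
    have h := hasDerivAt_dotProduct (hde s hs) (hasDerivAt_mulVec Wc⁻¹ (hde s hs))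
    rw [hVcdef]
    convert h using 1
    rw [sym_swap hWcisym (Dc s) (e s)]
    ring
  have hdVo : ∀ s, 0 ≤ s → HasDerivAt Vo (2 * (eo s ⬝ᵥ (Wo *ᵥ Do s))) s := by
    intro s hs
    have h := hasDerivAt_dotProduct (hdeo s hs) (hasDerivAt_mulVec Wo (hdeo s hs))
    rw [hVodef]
    convert h using 1
    rw [sym_swap hWosym (Do s) (eo s)]
    ring
  -- observer Lyapunov inequality
  have hVo_ineq : ∀ s, 0 ≤ s → 2 * (eo s ⬝ᵥ (Wo *ᵥ Do s)) ≤ -(2 * lamo) * Vo s := by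
    intro s hs
    have hmvt : f (xhat s) - f (x s) =
        ∫ r in (0:ℝ)..1, (A (x s + r • eo s)) *ᵥ eo s := by
      have := mvt_integral hf hA (x s) (xhat s)
      rw [this]
    have hcontA : Continuous fun r : ℝ => (A (x s + r • eo s)) *ᵥ eo s :=
      (hA.comp (by continuity)).matrix_mulVec continuous_const
    have hint : IntervalIntegrable (fun r : ℝ => (A (x s + r • eo s)) *ᵥ eo s)
        MeasureTheory.volume 0 1 := hcontA.intervalIntegrable _ _
    have hint2 : IntervalIntegrable
        (fun r : ℝ => (Wo *ᵥ eo s) ⬝ᵥ ((A (x s + r • eo s)) *ᵥ eo s))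
        MeasureTheory.volume 0 1 :=
      (continuous_const.dotProduct hcontA).intervalIntegrable _ _
    have hpull : eo s ⬝ᵥ (Wo *ᵥ (f (xhat s) - f (x s))) =
        ∫ r in (0:ℝ)..1, (Wo *ᵥ eo s) ⬝ᵥ ((A (x s + r • eo s)) *ᵥ eo s) := by
      rw [hmvt, dot_mulVec_swap Wo, hWosym]
      exact dot_intervalIntegral _ hint
    have hptw : ∀ r ∈ Set.Icc (0:ℝ) 1,
        (Wo *ᵥ eo s) ⬝ᵥ ((A (x s + r • eo s)) *ᵥ eo s) ≤
          (-(2 * lamo) * Vo s + ρo * ((C *ᵥ eo s) ⬝ᵥ (C *ᵥ eo s))) / 2 := by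
      intro r _
      have h1 := lmi_scalar_obs hWosym (hLMIo (x s + r • eo s)) (eo s)
      have h2 : (Wo *ᵥ eo s) ⬝ᵥ ((A (x s + r • eo s)) *ᵥ eo s) =
          eo s ⬝ᵥ (Wo *ᵥ ((A (x s + r • eo s)) *ᵥ eo s)) := by
        rw [dot_mulVec_swap Wo, hWosym]
      rw [h2, hVodef]
      linarith
    have hIneq : (∫ r in (0:ℝ)..1, (Wo *ᵥ eo s) ⬝ᵥ ((A (x s + r • eo s)) *ᵥ eo s)) ≤
        (-(2 * lamo) * Vo s + ρo * ((C *ᵥ eo s) ⬝ᵥ (C *ᵥ eo s))) / 2 := by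
      have h := intervalIntegral.integral_mono_on (by norm_num : (0:ℝ) ≤ 1) hint2
        (intervalIntegrable_const) hptw
      simpa using h
    have hWoL : ∀ u, Wo *ᵥ (L *ᵥ u) = (ρo / 2) • (Cᵀ *ᵥ u) := by
      intro u
      rw [hL, Matrix.smul_mulVec, Matrix.mulVec_smul, Matrix.mulVec_mulVec,
        ← Matrix.mul_assoc, hWoinv, Matrix.one_mul]
    have hLpart : eo s ⬝ᵥ (Wo *ᵥ (L *ᵥ (C *ᵥ x s - C *ᵥ xhat s))) =
        -((ρo / 2) * ((C *ᵥ eo s) ⬝ᵥ (C *ᵥ eo s))) := by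
      have hsub : C *ᵥ x s - C *ᵥ xhat s = -(C *ᵥ eo s) := by
        rw [heo', ← Matrix.mulVec_sub, ← Matrix.mulVec_neg]
        congr 1
        abel
      rw [hsub, hWoL, Matrix.mulVec_neg, dotProduct_smul, dotProduct_neg,
        dot_mulVec_swap Cᵀ, Matrix.transpose_transpose]
      simp [smul_eq_mul]
    have hsplit : eo s ⬝ᵥ (Wo *ᵥ Do s) =
        eo s ⬝ᵥ (Wo *ᵥ (f (xhat s) - f (x s))) +
          eo s ⬝ᵥ (Wo *ᵥ (L *ᵥ (C *ᵥ x s - C *ᵥ xhat s))) := by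
      rw [hDodef]
      simp only [Matrix.mulVec_add, dotProduct_add]
    rw [hsplit, hpull, hLpart]
    have hXnn : 0 ≤ (C *ᵥ eo s) ⬝ᵥ (C *ᵥ eo s) := dot_self_nonneg _
    linarith [hIneq]
  -- controller Lyapunov inequality
  have hVc_ineq : ∀ s, 0 ≤ s → 2 * (e s ⬝ᵥ (Wc⁻¹ *ᵥ Dc s)) ≤
      -(2 * lamc) * Vc s + κ * Real.sqrt (Vc s) * Real.sqrt (Vo s) := by
    intro s hs
    have hmvt : f (x s) - f (xstar s) =
        ∫ r in (0:ℝ)..1, (A (xstar s + r • e s)) *ᵥ e s := by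
      have := mvt_integral hf hA (xstar s) (x s)
      rw [this]
    have hcontA : Continuous fun r : ℝ => (A (xstar s + r • e s)) *ᵥ e s :=
      (hA.comp (by continuity)).matrix_mulVec continuous_const
    have hint : IntervalIntegrable (fun r : ℝ => (A (xstar s + r • e s)) *ᵥ e s)
        MeasureTheory.volume 0 1 := hcontA.intervalIntegrable _ _
    have hint2 : IntervalIntegrable
        (fun r : ℝ => (Wc⁻¹ *ᵥ e s) ⬝ᵥ ((A (xstar s + r • e s)) *ᵥ e s))
        MeasureTheory.volume 0 1 :=
      (continuous_const.dotProduct hcontA).intervalIntegrable _ _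
    have hpull : e s ⬝ᵥ (Wc⁻¹ *ᵥ (f (x s) - f (xstar s))) =
        ∫ r in (0:ℝ)..1, (Wc⁻¹ *ᵥ e s) ⬝ᵥ ((A (xstar s + r • e s)) *ᵥ e s) := by
      rw [hmvt, dot_mulVec_swap Wc⁻¹, hWcisym]
      exact dot_intervalIntegral _ hint
    set Q := (Bᵀ *ᵥ (Wc⁻¹ *ᵥ e s)) ⬝ᵥ (Bᵀ *ᵥ (Wc⁻¹ *ᵥ e s)) with hQ
    have hQnn : 0 ≤ Q := dot_self_nonneg _
    have hptw : ∀ r ∈ Set.Icc (0:ℝ) 1,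
        (Wc⁻¹ *ᵥ e s) ⬝ᵥ ((A (xstar s + r • e s)) *ᵥ e s) ≤
          (-(2 * lamc) * Vc s + ρc * Q) / 2 := by
      intro r _
      have h1 := lmi_scalar_ctrl hWcsym hWcinv (hLMIc (xstar s + r • e s)) (e s)
      have h2 : Vc s = e s ⬝ᵥ (Wc⁻¹ *ᵥ e s) := rfl
      rw [h2, hQ]
      linarith
    have hIneq : (∫ r in (0:ℝ)..1, (Wc⁻¹ *ᵥ e s) ⬝ᵥ ((A (xstar s + r • e s)) *ᵥ e s)) ≤
        (-(2 * lamc) * Vc s + ρc * Q) / 2 := by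
      have h := intervalIntegral.integral_mono_on (by norm_num : (0:ℝ) ≤ 1) hint2
        intervalIntegrable_const hptw
      simpa using h
    have hKe : e s ⬝ᵥ (Wc⁻¹ *ᵥ (B *ᵥ (K *ᵥ e s))) = -((ρc / 2) * Q) := by
      rw [hK, Matrix.smul_mulVec, Matrix.mulVec_smul, Matrix.mulVec_smul,
        dotProduct_smul, ← Matrix.mulVec_mulVec,
        dot_mulVec_swap Wc⁻¹, hWcisym, dot_mulVec_swap B, hQ]
      simp [smul_eq_mul]
    have hcross : e s ⬝ᵥ (Wc⁻¹ *ᵥ (B *ᵥ (K *ᵥ eo s))) ≤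
        (κ / 2) * Real.sqrt (Vc s) * Real.sqrt (Vo s) := by
      have h1 : e s ⬝ᵥ (Wc⁻¹ *ᵥ (B *ᵥ (K *ᵥ eo s))) = e s ⬝ᵥ (N *ᵥ eo s) := by
        rw [hN, ← Matrix.mulVec_mulVec, ← Matrix.mulVec_mulVec]
      have h2 : e s ⬝ᵥ (N *ᵥ eo s) ≤
          Real.sqrt (e s ⬝ᵥ e s) * Real.sqrt ((N *ᵥ eo s) ⬝ᵥ (N *ᵥ eo s)) := dot_CS _ _
      have h3 : Real.sqrt ((N *ᵥ eo s) ⬝ᵥ (N *ᵥ eo s)) ≤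
          Real.sqrt (frobSq N) * Real.sqrt (eo s ⬝ᵥ eo s) := sqrt_mulVec_dot_le N (eo s)
      have h4 : Real.sqrt (e s ⬝ᵥ e s) ≤ Real.sqrt sβc * Real.sqrt (Vc s) := by
        have hlow := posdef_lower hWc.inv (e s)
        rw [hWcii] at hlow
        calc Real.sqrt (e s ⬝ᵥ e s) ≤ Real.sqrt (sβc * Vc s) := by
              apply Real.sqrt_le_sqrt
              rw [hsβc]
              exact hlow
          _ = Real.sqrt sβc * Real.sqrt (Vc s) := Real.sqrt_mul hsβcnn _
      have h5 : Real.sqrt (eo s ⬝ᵥ eo s) ≤ Real.sqrt sβo * Real.sqrt (Vo s) := by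
        have hlow := posdef_lower hWo (eo s)
        calc Real.sqrt (eo s ⬝ᵥ eo s) ≤ Real.sqrt (sβo * Vo s) := by
              apply Real.sqrt_le_sqrt
              rw [hsβo]
              exact hlow
          _ = Real.sqrt sβo * Real.sqrt (Vo s) := Real.sqrt_mul hsβonn _
      have h6 : Real.sqrt ((N *ᵥ eo s) ⬝ᵥ (N *ᵥ eo s)) ≤
          Real.sqrt (frobSq N) * (Real.sqrt sβo * Real.sqrt (Vo s)) :=
        h3.trans (mul_le_mul_of_nonneg_left h5 (Real.sqrt_nonneg _))
      have h7 : Real.sqrt (e s ⬝ᵥ e s) * Real.sqrt ((N *ᵥ eo s) ⬝ᵥ (N *ᵥ eo s)) ≤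
          (Real.sqrt sβc * Real.sqrt (Vc s)) *
            (Real.sqrt (frobSq N) * (Real.sqrt sβo * Real.sqrt (Vo s))) :=
        mul_le_mul h4 h6 (Real.sqrt_nonneg _) (by positivity)
      rw [h1]
      calc e s ⬝ᵥ (N *ᵥ eo s) ≤ _ := h2
        _ ≤ _ := h7
        _ = (κ / 2) * Real.sqrt (Vc s) * Real.sqrt (Vo s) := by rw [hκ]; ring
    have hsplit : e s ⬝ᵥ (Wc⁻¹ *ᵥ Dc s) =
        e s ⬝ᵥ (Wc⁻¹ *ᵥ (f (x s) - f (xstar s))) +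
          e s ⬝ᵥ (Wc⁻¹ *ᵥ (B *ᵥ (K *ᵥ eo s))) +
          e s ⬝ᵥ (Wc⁻¹ *ᵥ (B *ᵥ (K *ᵥ e s))) := by
      simp only [hDcdef, Matrix.mulVec_add, dotProduct_add]
      ring
    rw [hsplit, hpull, hKe]
    linarith [hIneq, hcross]
  -- observer decay
  have hVo_exp : ∀ s, 0 ≤ s → Vo s ≤ Vo 0 * Real.exp (-(2 * lamo) * s) :=
    fun s hs => gron_decay hlamo.le hdVo hVo_ineq hs
  have hsVo : ∀ s, 0 ≤ s → Real.sqrt (Vo s) ≤ Real.sqrt (Vo 0) * Real.exp (-lamo * s) := by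
    intro s hs
    calc Real.sqrt (Vo s) ≤ Real.sqrt (Vo 0 * Real.exp (-(2 * lamo) * s)) :=
          Real.sqrt_le_sqrt (hVo_exp s hs)
      _ = Real.sqrt (Vo 0) * Real.exp (-lamo * s) := sqrt_exp_decay _ _ _
  set b := Real.sqrt (Vo 0) with hb
  have hbnn : 0 ≤ b := Real.sqrt_nonneg _
  -- the δ-regularized comparison argument for `Vc`
  have hkey : ∀ δ : ℝ, 0 < δ →
      Real.sqrt (Vc t0) * Real.exp (μ * t0) ≤
        Real.sqrt (Vc 0 + δ) +
          (κ * b / 2 + lamc * Real.sqrt δ * Real.exp (μ * t0)) * t0 := by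
    intro δ hδ
    set w : ℝ → ℝ := fun s => Real.sqrt (Vc s + δ) with hw
    have hwpos : ∀ s, 0 < w s := by
      intro s
      rw [hw]
      exact Real.sqrt_pos.2 (by have := hVcnn s; linarith)
    have hwne : ∀ s, w s ≠ 0 := fun s => (hwpos s).ne'
    set dz : ℝ → ℝ := fun s =>
      ((e s ⬝ᵥ (Wc⁻¹ *ᵥ Dc s)) / w s) * Real.exp (μ * s) +
        w s * (Real.exp (μ * s) * μ) with hdzdef
    set z : ℝ → ℝ := fun s => w s * Real.exp (μ * s) with hzdef
    have hdw : ∀ s, 0 ≤ s → HasDerivAt w ((e s ⬝ᵥ (Wc⁻¹ *ᵥ Dc s)) / w s) s := by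
      intro s hs
      have h1 : HasDerivAt (fun r => Vc r + δ) (2 * (e s ⬝ᵥ (Wc⁻¹ *ᵥ Dc s))) s :=
        (hdVc s hs).add_const δ
      have hne : Vc s + δ ≠ 0 := by have := hVcnn s; positivity
      have h2 := h1.sqrt hne
      rw [hw]
      convert h2 using 1
      field_simp
    have hdzd : ∀ s, 0 ≤ s → HasDerivAt z (dz s) s := by
      intro s hs
      have hexp : HasDerivAt (fun r : ℝ => Real.exp (μ * r)) (Real.exp (μ * s) * μ) s := by
        simpa using (((hasDerivAt_id s).const_mul μ).exp)
      exact (hdw s hs).mul hexp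
    have hbound : ∀ s, 0 ≤ s → s ≤ t0 →
        dz s ≤ κ * b / 2 + lamc * Real.sqrt δ * Real.exp (μ * t0) := by
      intro s hs hst
      have hE : Real.exp (μ * s) ≤ Real.exp (μ * t0) :=
        Real.exp_le_exp.2 (by nlinarith [hμpos.le])
      have hEpos : (0:ℝ) < Real.exp (μ * s) := Real.exp_pos _
      have heLpos : (0:ℝ) < Real.exp (-lamo * s) := Real.exp_pos _
      have hEeL : Real.exp (μ * s) * Real.exp (-lamo * s) ≤ 1 := by
        rw [← Real.exp_add]
        apply Real.exp_le_one_iff.2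
        nlinarith
      have hsVc : Real.sqrt (Vc s) ≤ w s := by
        rw [hw]
        exact Real.sqrt_le_sqrt (by linarith)
      have hδw : Real.sqrt δ ≤ w s := by
        rw [hw]
        exact Real.sqrt_le_sqrt (by linarith [hVcnn s])
      have hw2 : w s * w s = Vc s + δ := by
        rw [hw]
        exact Real.mul_self_sqrt (by have := hVcnn s; positivity)
      have hVos := hsVo s hs
      have hsVonn : 0 ≤ Real.sqrt (Vo s) := Real.sqrt_nonneg _
      have hwnn : 0 ≤ w s := (hwpos s).le
      have hXle : 2 * (e s ⬝ᵥ (Wc⁻¹ *ᵥ Dc s)) ≤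
          -(2 * μ) * Vc s + κ * w s * (b * Real.exp (-lamo * s)) := by
        have h1 := hVc_ineq s hs
        have h2 : κ * Real.sqrt (Vc s) * Real.sqrt (Vo s) ≤
            κ * w s * (b * Real.exp (-lamo * s)) := by
          have h2a : Real.sqrt (Vc s) * Real.sqrt (Vo s) ≤
              w s * (b * Real.exp (-lamo * s)) :=
            mul_le_mul hsVc hVos hsVonn hwnn
          have := mul_le_mul_of_nonneg_left h2a hκnn
          calc κ * Real.sqrt (Vc s) * Real.sqrt (Vo s)
              = κ * (Real.sqrt (Vc s) * Real.sqrt (Vo s)) := by ring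
            _ ≤ κ * (w s * (b * Real.exp (-lamo * s))) := this
            _ = κ * w s * (b * Real.exp (-lamo * s)) := by ring
        have h3 : -(2 * lamc) * Vc s ≤ -(2 * μ) * Vc s :=
          mul_le_mul_of_nonneg_right (by linarith : -(2*lamc) ≤ -(2*μ)) (hVcnn s)
        linarith
      rw [hdzdef]
      exact dz_bound hδ (hwpos s) hw2 (hVcnn s) hδw hEpos hE (Real.exp_pos _)
        heLpos hEeL hμpos hμc hκnn hbnn hXle
    have hlin := lin_growth ht0 hdzd hbound
    have hz0 : z 0 = Real.sqrt (Vc 0 + δ) := by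
      rw [hzdef]
      simp [hw]
    have hzt : Real.sqrt (Vc t0) * Real.exp (μ * t0) ≤ z t0 := by
      rw [hzdef]
      have hle : Real.sqrt (Vc t0) ≤ w t0 := by
        rw [hw]
        exact Real.sqrt_le_sqrt (by linarith)
      exact mul_le_mul_of_nonneg_right hle (Real.exp_pos _).le
    rw [hz0] at hlin
    calc Real.sqrt (Vc t0) * Real.exp (μ * t0) ≤ z t0 := hzt
      _ ≤ Real.sqrt (Vc 0 + δ) +
          (κ * b / 2 + lamc * Real.sqrt δ * Real.exp (μ * t0)) * t0 := by linarith
  -- pass to the limit δ → 0⁺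
  have hfin : Real.sqrt (Vc t0) * Real.exp (μ * t0) ≤
      Real.sqrt (Vc 0) + (κ * b / 2) * t0 := by
    set F : ℝ → ℝ := fun δ => Real.sqrt (Vc 0 + δ) +
      (κ * b / 2 + lamc * Real.sqrt δ * Real.exp (μ * t0)) * t0 with hF
    have hcont : Continuous F := by
      rw [hF]
      exact (Real.continuous_sqrt.comp (continuous_const.add continuous_id)).add
        ((continuous_const.add
          ((continuous_const.mul Real.continuous_sqrt).mul continuous_const)).mul
            continuous_const)
    have htend : Filter.Tendsto F (nhdsWithin 0 (Set.Ioi 0)) (𝓝 (F 0)) :=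
      (hcont.continuousAt.tendsto).mono_left nhdsWithin_le_nhds
    have hF0 : F 0 = Real.sqrt (Vc 0) + (κ * b / 2) * t0 := by
      rw [hF]
      simp
    have hev : ∀ᶠ δ in nhdsWithin 0 (Set.Ioi 0),
        Real.sqrt (Vc t0) * Real.exp (μ * t0) ≤ F δ :=
      Filter.eventually_of_mem self_mem_nhdsWithin fun δ hδ => hkey δ hδ
    have := ge_of_tendsto htend hev
    rwa [hF0] at this
  -- final assembly
  set a0 := Real.sqrt (e 0 ⬝ᵥ e 0) with ha0
  set b0 := Real.sqrt (eo 0 ⬝ᵥ eo 0) with hb0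
  have ha0nn : 0 ≤ a0 := Real.sqrt_nonneg _
  have hb0nn : 0 ≤ b0 := Real.sqrt_nonneg _
  have hVc0le : Real.sqrt (Vc 0) ≤ Real.sqrt sαc * a0 := by
    have h := quad_upper Wc⁻¹ (e 0)
    calc Real.sqrt (Vc 0) ≤ Real.sqrt (sαc * (e 0 ⬝ᵥ e 0)) := by
          apply Real.sqrt_le_sqrt
          rw [hsαc]
          exact h
      _ = Real.sqrt sαc * a0 := by
          rw [Real.sqrt_mul hsαcnn, ha0]
  have hb_le : b ≤ Real.sqrt sαo * b0 := by
    have h := quad_upper Wo (eo 0)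
    calc b ≤ Real.sqrt (sαo * (eo 0 ⬝ᵥ eo 0)) := by
          rw [hb]
          apply Real.sqrt_le_sqrt
          rw [hsαo]
          exact h
      _ = Real.sqrt sαo * b0 := by
          rw [Real.sqrt_mul hsαonn, hb0]
  have h_e : Real.sqrt (e t0 ⬝ᵥ e t0) ≤ Real.sqrt sβc * Real.sqrt (Vc t0) := by
    have hlow := posdef_lower hWc.inv (e t0)
    rw [hWcii] at hlow
    calc Real.sqrt (e t0 ⬝ᵥ e t0) ≤ Real.sqrt (sβc * Vc t0) := by
          apply Real.sqrt_le_sqrt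
          rw [hsβc]
          exact hlow
      _ = Real.sqrt sβc * Real.sqrt (Vc t0) := Real.sqrt_mul hsβcnn _
  have h_eo : Real.sqrt (eo t0 ⬝ᵥ eo t0) ≤ Real.sqrt sβo * Real.sqrt (Vo t0) := by
    have hlow := posdef_lower hWo (eo t0)
    calc Real.sqrt (eo t0 ⬝ᵥ eo t0) ≤ Real.sqrt (sβo * Vo t0) := by
          apply Real.sqrt_le_sqrt
          rw [hsβo]
          exact hlow
      _ = Real.sqrt sβo * Real.sqrt (Vo t0) := Real.sqrt_mul hsβonn _
  set Ex := Real.exp (-μ * t0) with hEx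
  have hExpos : 0 < Ex := Real.exp_pos _
  have hEE : Real.exp (μ * t0) * Ex = 1 := by
    rw [hEx, ← Real.exp_add]
    norm_num
  have hVo_t : Real.sqrt (Vo t0) ≤ (Real.sqrt sαo * b0) * Ex := by
    have h1 := hsVo t0 ht0
    have h2 : Real.exp (-lamo * t0) ≤ Ex := by
      rw [hEx]
      apply Real.exp_le_exp.2
      nlinarith
    calc Real.sqrt (Vo t0) ≤ b * Real.exp (-lamo * t0) := h1
      _ ≤ (Real.sqrt sαo * b0) * Ex := by
          exact mul_le_mul hb_le h2 (Real.exp_pos _).le (by positivity)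
  have hVc_t : Real.sqrt (Vc t0) ≤
      (Real.sqrt sαc * a0 + (κ * (Real.sqrt sαo * b0) / 2) * t0) * Ex := by
    have h1 : Real.sqrt (Vc 0) + (κ * b / 2) * t0 ≤
        Real.sqrt sαc * a0 + (κ * (Real.sqrt sαo * b0) / 2) * t0 := by
      have h2 : κ * b ≤ κ * (Real.sqrt sαo * b0) := mul_le_mul_of_nonneg_left hb_le hκnn
      have h3 : (κ * b / 2) * t0 ≤ (κ * (Real.sqrt sαo * b0) / 2) * t0 :=
        mul_le_mul_of_nonneg_right (by linarith) ht0
      linarith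
    have h4 := mul_le_mul_of_nonneg_right (hfin.trans h1) hExpos.le
    calc Real.sqrt (Vc t0) = Real.sqrt (Vc t0) * (Real.exp (μ * t0) * Ex) := by
          rw [hEE, mul_one]
      _ = Real.sqrt (Vc t0) * Real.exp (μ * t0) * Ex := by ring
      _ ≤ (Real.sqrt sαc * a0 + (κ * (Real.sqrt sαo * b0) / 2) * t0) * Ex := h4
  have hsum : Real.sqrt (e t0 ⬝ᵥ e t0) + Real.sqrt (eo t0 ⬝ᵥ eo t0) ≤
      (c1 + c2 + c3 + 1) * (1 + t0) * Ex * (a0 + b0) := by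
    have hA : Real.sqrt (e t0 ⬝ᵥ e t0) ≤
        Real.sqrt sβc * ((Real.sqrt sαc * a0 + (κ * (Real.sqrt sαo * b0) / 2) * t0) * Ex) :=
      h_e.trans (mul_le_mul_of_nonneg_left hVc_t (Real.sqrt_nonneg _))
    have hB : Real.sqrt (eo t0 ⬝ᵥ eo t0) ≤ Real.sqrt sβo * ((Real.sqrt sαo * b0) * Ex) :=
      h_eo.trans (mul_le_mul_of_nonneg_left hVo_t (Real.sqrt_nonneg _))
    have hC : Real.sqrt sβc * ((Real.sqrt sαc * a0 + (κ * (Real.sqrt sαo * b0) / 2) * t0) * Ex) +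
        Real.sqrt sβo * ((Real.sqrt sαo * b0) * Ex) =
        Ex * (c1 * a0 + c2 * t0 * b0 + c3 * b0) := by
      rw [hc1, hc2, hc3]
      ring
    have hD : c1 * a0 + c2 * t0 * b0 + c3 * b0 ≤
        (c1 + c2 + c3 + 1) * (1 + t0) * (a0 + b0) := by
      have hSnn : (0:ℝ) ≤ c1 + c2 + c3 + 1 := by linarith
      have d1 : c1 * a0 ≤ (c1 + c2 + c3 + 1) * a0 :=
        mul_le_mul_of_nonneg_right (by linarith) ha0nn
      have d2 : c3 * b0 ≤ (c1 + c2 + c3 + 1) * b0 :=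
        mul_le_mul_of_nonneg_right (by linarith) hb0nn
      have d3 : c2 * b0 ≤ (c1 + c2 + c3 + 1) * (a0 + b0) := by
        have e1 : c2 * b0 ≤ (c1 + c2 + c3 + 1) * b0 :=
          mul_le_mul_of_nonneg_right (by linarith) hb0nn
        have e2 : (c1 + c2 + c3 + 1) * b0 ≤ (c1 + c2 + c3 + 1) * (a0 + b0) :=
          mul_le_mul_of_nonneg_left (by linarith) hSnn
        linarith
      have d4 : c2 * t0 * b0 ≤ (c1 + c2 + c3 + 1) * (a0 + b0) * t0 := by
        calc c2 * t0 * b0 = (c2 * b0) * t0 := by ring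
          _ ≤ ((c1 + c2 + c3 + 1) * (a0 + b0)) * t0 :=
              mul_le_mul_of_nonneg_right d3 ht0
      have hexp : (c1 + c2 + c3 + 1) * (1 + t0) * (a0 + b0) =
          (c1 + c2 + c3 + 1) * a0 + (c1 + c2 + c3 + 1) * b0 +
            (c1 + c2 + c3 + 1) * (a0 + b0) * t0 := by ring
      linarith
    have hE2 : Ex * (c1 * a0 + c2 * t0 * b0 + c3 * b0) ≤
        Ex * ((c1 + c2 + c3 + 1) * (1 + t0) * (a0 + b0)) :=
      mul_le_mul_of_nonneg_left hD hExpos.le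
    calc Real.sqrt (e t0 ⬝ᵥ e t0) + Real.sqrt (eo t0 ⬝ᵥ eo t0) ≤
          Ex * (c1 * a0 + c2 * t0 * b0 + c3 * b0) := by
          rw [← hC]
          linarith
      _ ≤ Ex * ((c1 + c2 + c3 + 1) * (1 + t0) * (a0 + b0)) := hE2
      _ = (c1 + c2 + c3 + 1) * (1 + t0) * Ex * (a0 + b0) := by ring
  simp only [ha0, hb0, he, heo, hEx] at hsum
  exact hsum
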